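/- Write ℝⁿ = ℝ^{n₁}×⋯×ℝ^{n_k} and let 𝒮 have the strong decomposition property with respect to bases 𝒮ᵢ in ℝ^{nᵢ}. If f ∈ BLO_{𝒮ᵢ}(ℝⁿ) for some 1 ≤ i ≤ k, then f ∈ BLO_{rec,𝒮}(ℝ^{n₁}×⋯×ℝ^{n_k}) with ‖f‖_{BLO_{rec,𝒮}} ≤ ‖f‖_{BLO_{𝒮ᵢ}(ℝⁿ)}. Consequently, if f ∈ ⋃_{i=1}^{k} BLO_{𝒮ᵢ}(ℝⁿ), then ‖f‖_{BLO_{rec,𝒮}} ≤ min_{1≤i≤k} ‖f‖_{BLO_{𝒮ᵢ}(ℝⁿ)}. -/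

import Mathlib

open MeasureTheory Set ENNReal

noncomputable section

/-- A shape: an open set of finite positive Lebesgue measure. -/
def IsShape {α : Type*} [TopologicalSpace α] [MeasureSpace α] (S : Set α) : Prop :=
  IsOpen S ∧ 0 < volume S ∧ volume S < ⊤

/-- A basis of shapes: a collection of shapes covering the space. -/
def IsShapeBasis {α : Type*} [TopologicalSpace α] [MeasureSpace α] (𝒮 : Set (Set α)) : Prop :=
  (∀ S ∈ 𝒮, IsShape S) ∧ ⋃₀ 𝒮 = Set.univ

/-- `𝒮` satisfies the strong decomposition property with respect to the bases `𝒮ᵢ`. -/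
def StrongDecomposition {k : ℕ} {n : Fin k → ℕ} (𝒮 : Set (Set (∀ j, Fin (n j) → ℝ)))
    (𝒮i : ∀ i, Set (Set (Fin (n i) → ℝ))) : Prop :=
  (∀ S ∈ 𝒮, ∃ T : ∀ i, Set (Fin (n i) → ℝ), (∀ i, T i ∈ 𝒮i i) ∧ S = Set.univ.pi T) ∧
  (∀ T : ∀ i, Set (Fin (n i) → ℝ), (∀ i, T i ∈ 𝒮i i) → Set.univ.pi T ∈ 𝒮)

/-- The rectangular BLO norm: the supremum over product shapes `S = S₁×⋯×S_k` (with
`Sᵢ ∈ 𝒮ᵢ`) of `⨍_S [f(z) − max_{1≤i≤k} essinf_{Sᵢ} f_{ẑᵢ}] dz`, where `f_{ẑᵢ}` is the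
slice of `f` in the `i`-th block through `z`. -/
def recBloNorm {k : ℕ} {n : Fin k → ℕ} (𝒮i : ∀ i, Set (Set (Fin (n i) → ℝ)))
    (f : (∀ j, Fin (n j) → ℝ) → ℝ) : ℝ≥0∞ :=
  ⨆ T ∈ Set.univ.pi 𝒮i, ENNReal.ofReal
    (⨍ z in Set.univ.pi T,
      (f z - ⨆ i, essInf (fun w => f (Function.update z i w)) (volume.restrict (T i))))

/-- The BLO norm of `f` with respect to the basis `𝒮`. -/
def bloNorm {α : Type*} [MeasureSpace α] (𝒮 : Set (Set α)) (f : α → ℝ) : ℝ≥0∞ :=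
  ⨆ S ∈ 𝒮, ENNReal.ofReal (⨍ z in S, (f z - essInf f (volume.restrict S)))

/-- The lower-dimensional `BLO_{𝒮ᵢ}(ℝⁿ)` norm: the supremum over `ẑᵢ` (encoded by a full
point `z`, whose `i`-th component is irrelevant) of the `BLO_{𝒮ᵢ}(ℝ^{nᵢ})` norm of the slice
`f_{ẑᵢ}`. -/
def bloSliceNorm {k : ℕ} {n : Fin k → ℕ} (i : Fin k)
    (𝒮i : Set (Set (Fin (n i) → ℝ))) (f : (∀ j, Fin (n j) → ℝ) → ℝ) : ℝ≥0∞ :=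
  ⨆ z : ∀ j, Fin (n j) → ℝ, bloNorm 𝒮i (fun w => f (Function.update z i w))


set_option maxHeartbeats 1000000

/-- Key auxiliary lemma: the rectangular BLO norm is bounded by any single finite
lower-dimensional slice BLO norm. -/
theorem aux_rec_le_slice {k : ℕ} {n : Fin k → ℕ} (hk : 2 ≤ k)
    (𝒮i : ∀ i, Set (Set (Fin (n i) → ℝ)))
    (h𝒮i : ∀ i, IsShapeBasis (𝒮i i))
    (f : (∀ j, Fin (n j) → ℝ) → ℝ)
    (hslice : ∀ (i : Fin k) (z : ∀ j, Fin (n j) → ℝ), ∀ Si ∈ 𝒮i i,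
      IntegrableOn (fun w => f (Function.update z i w)) Si)
    (i₀ : Fin k) (hfin : bloSliceNorm i₀ (𝒮i i₀) f < ⊤) :
    recBloNorm 𝒮i f ≤ bloSliceNorm i₀ (𝒮i i₀) f := by
  haveI : Nonempty (Fin k) := ⟨i₀⟩
  set M := bloSliceNorm i₀ (𝒮i i₀) f with hM
  rw [recBloNorm]
  refine iSup₂_le fun T hT => ?_
  -- set up the splitting equivalence
  letI : Unique {j : Fin k // j = i₀} := ⟨⟨⟨i₀, rfl⟩⟩, fun x => Subtype.ext x.2⟩
  set π : Fin k → Type := fun j => Fin (n j) → ℝ with hπ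
  let e : (∀ j, π j) ≃ᵐ (π i₀ × ∀ j : {j : Fin k // j ≠ i₀}, π j) :=
    (MeasurableEquiv.piEquivPiSubtypeProd π (fun j => j = i₀)).trans
      ((MeasurableEquiv.piUnique (fun j : {j : Fin k // j = i₀} => π j)).prodCongr
        (MeasurableEquiv.refl _))
  have he : ∀ z, e z = (z i₀, fun j : {j : Fin k // j ≠ i₀} => z j.1) := fun z => rfl
  have mp : MeasurePreserving e volume volume := by
    have h1 := MeasureTheory.volume_preserving_piEquivPiSubtypeProd π (fun j => j = i₀)
    have h2 : MeasurePreserving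
        (⇑((MeasurableEquiv.piUnique (fun j : {j : Fin k // j = i₀} => π j.1)).prodCongr
          (MeasurableEquiv.refl (∀ j : {j : Fin k // j ≠ i₀}, π j)))) volume volume := by
      have h3 := (MeasureTheory.volume_preserving_piUnique
          (fun j : {j : Fin k // j = i₀} => π j.1)).prod
          (MeasurePreserving.id (volume : Measure (∀ j : {j : Fin k // j ≠ i₀}, π j)))
      rw [← Measure.volume_eq_prod] at h3
      convert h3 using 2 <;> first | rfl | exact Subsingleton.elim _ _
    have hce : ⇑e = ⇑((MeasurableEquiv.piUnique (fun j : {j : Fin k // j = i₀} => π j.1)).prodCongr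
          (MeasurableEquiv.refl (∀ j : {j : Fin k // j ≠ i₀}, π j))) ∘
        ⇑(MeasurableEquiv.piEquivPiSubtypeProd π (fun j => j = i₀)) := rfl
    rw [hce]
    have h1' : MeasurePreserving (⇑(MeasurableEquiv.piEquivPiSubtypeProd π (fun j => j = i₀)))
        volume volume := by
      convert h1 using 2
      congr!
      rfl
      exact congrArg (fun I => @Measure.prod.measureSpace _ _ (@MeasureSpace.pi _ I _ fun _ => MeasureSpace.pi) MeasureSpace.pi) (Subsingleton.elim _ _)
    exact h2.comp h1' 
  have mps : MeasurePreserving e.symm volume volume := MeasurePreserving.symm e mp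
  set A : Set (π i₀) := T i₀ with hA
  set B : Set (∀ j : {j : Fin k // j ≠ i₀}, π j) := univ.pi fun j => T j.1 with hB
  have hTshape : ∀ i, IsShape (T i) := fun i => (h𝒮i i).1 _ (hT i trivial)
  have mA : MeasurableSet A := (hTshape i₀).1.measurableSet
  have mB : MeasurableSet B := MeasurableSet.univ_pi fun j => (hTshape j.1).1.measurableSet
  have hpre : e ⁻¹' (A ×ˢ B) = univ.pi T := by
    ext z
    simp only [mem_preimage, he, mem_prod, mem_pi, mem_univ, true_implies, Subtype.forall, hA,
      hB]
    constructor
    · rintro ⟨h1, h2⟩ j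
      by_cases hj : j = i₀
      · subst hj; exact h1
      · exact h2 j hj
    · intro hz; exact ⟨hz i₀, fun j hj => hz j⟩
  have hpre' : e.symm ⁻¹' (univ.pi T) = A ×ˢ B := by
    rw [← hpre]; ext p
    simp [MeasurableEquiv.apply_symm_apply]
  have hupd : ∀ (w : π i₀) (y : ∀ j : {j : Fin k // j ≠ i₀}, π j),
      e.symm (w, y) = Function.update (e.symm (0, y)) i₀ w := by
    intro w y
    apply e.injective
    rw [MeasurableEquiv.apply_symm_apply, he]
    refine Prod.ext ?_ ?_
    · simp
    · funext j
      show y j = Function.update (e.symm (0, y)) i₀ w j.1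
      rw [Function.update_of_ne j.2]
      have h4 : (e (e.symm (0, y))).2 = y := by rw [MeasurableEquiv.apply_symm_apply]
      rw [he] at h4
      exact (congrFun h4 j).symm
  -- volumes
  have hvolS : volume (univ.pi T) = volume A * volume B := by
    rw [← hpre, mp.measure_preimage (mA.prod mB).nullMeasurableSet, Measure.volume_eq_prod,
      Measure.prod_prod]
  have hvolA0 : volume A ≠ 0 := (hTshape i₀).2.1.ne'
  have hvolAt : volume A ≠ ⊤ := (hTshape i₀).2.2.ne
  have hvolB0 : volume B ≠ 0 := by
    rw [hB, volume_pi, Measure.pi_pi]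
    exact Finset.prod_ne_zero_iff.2 fun j _ => (hTshape j.1).2.1.ne'
  have hvolBt : volume B ≠ ⊤ := by
    rw [hB, volume_pi, Measure.pi_pi]
    exact (ENNReal.prod_lt_top fun j _ => (hTshape j.1).2.2).ne
  -- abbreviate the integrand
  set h : (∀ j, π j) → ℝ := fun z =>
    f z - ⨆ i, essInf (fun w => f (Function.update z i w)) (volume.restrict (T i)) with hh
  show ENNReal.ofReal (⨍ z in univ.pi T, h z) ≤ M
  by_cases hint : Integrable h (volume.restrict (univ.pi T))
  swap
  · rw [setAverage_eq, integral_undef hint, smul_zero, ENNReal.ofReal_zero]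
    exact zero_le'
  -- transfer to the product
  have mS : MeasurableSet (univ.pi T) :=
    MeasurableSet.univ_pi fun j => (hTshape j).1.measurableSet
  have hmp2 : MeasurePreserving (⇑e.symm) (volume.restrict (⇑e.symm ⁻¹' (univ.pi T)))
      (volume.restrict (univ.pi T)) := mps.restrict_preimage mS
  rw [hpre'] at hmp2
  have hemb : MeasurableEmbedding (⇑e.symm) := MeasurableEquiv.measurableEmbedding _
  have hFint0 : Integrable (h ∘ ⇑e.symm) (volume.restrict (A ×ˢ B)) :=
    (hmp2.integrable_comp_emb hemb).2 hint
  have hFint : Integrable (fun p : π i₀ × (∀ j : {j : Fin k // j ≠ i₀}, π j) => h (e.symm p))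
      ((volume.restrict A).prod (volume.restrict B)) := by
    rw [Measure.prod_restrict, ← Measure.volume_eq_prod]
    exact hFint0
  have hIeq : ∫ z in univ.pi T, h z =
      ∫ y in B, ∫ w in A, h (e.symm (w, y)) := by
    have h5 := mps.setIntegral_preimage_emb hemb h (univ.pi T)
    rw [hpre'] at h5
    rw [← h5, Measure.volume_eq_prod, ← Measure.prod_restrict]
    exact integral_prod_symm _ hFint
  set M' := M.toReal with hM'
  have hMne : M ≠ ⊤ := hfin.ne
  have ha : (volume A).toReal ≠ 0 := ENNReal.toReal_ne_zero.2 ⟨hvolA0, hvolAt⟩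
  have hb : (volume B).toReal ≠ 0 := ENNReal.toReal_ne_zero.2 ⟨hvolB0, hvolBt⟩
  -- inner bound
  have hinner : ∀ y : ∀ j : {j : Fin k // j ≠ i₀}, π j,
      ∫ w in A, h (e.symm (w, y)) ≤ M' * (volume A).toReal := by
    intro y
    set z₀ : ∀ j, π j := e.symm (0, y) with hz₀
    have hrw : (fun w => h (e.symm (w, y))) = fun w => h (Function.update z₀ i₀ w) := by
      funext w; rw [hupd]
    rw [hrw]
    set g : π i₀ → ℝ := fun w => f (Function.update z₀ i₀ w) with hg
    set c : ℝ := essInf g (volume.restrict (T i₀)) with hc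
    have hptwise : ∀ w, h (Function.update z₀ i₀ w) ≤ g w - c := by
      intro w
      have hle := le_ciSup (f := fun i => essInf
          (fun w' => f (Function.update (Function.update z₀ i₀ w) i w'))
          (volume.restrict (T i))) (Set.Finite.bddAbove (Set.finite_range _)) i₀
      simp only [Function.update_idem] at hle
      exact sub_le_sub_left hle _
    by_cases hyint : IntegrableOn (fun w => h (Function.update z₀ i₀ w)) A volume
    swap
    · rw [integral_undef hyint]
      exact mul_nonneg ENNReal.toReal_nonneg ENNReal.toReal_nonneg
    have hgi : IntegrableOn g A volume := hslice i₀ z₀ (T i₀) (hT i₀ trivial)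
    have hφi : IntegrableOn (fun w => g w - c) A volume :=
      hgi.sub (integrableOn_const (hTshape i₀).2.2.ne)
    have step1 : ∫ w in A, h (Function.update z₀ i₀ w) ≤ ∫ w in A, (g w - c) :=
      integral_mono hyint hφi hptwise
    have hblo0 : bloNorm (𝒮i i₀) (fun w => f (Function.update z₀ i₀ w)) ≤ M := by
      rw [hM, bloSliceNorm]
      exact le_iSup (fun z => bloNorm (𝒮i i₀) fun w => f (Function.update z i₀ w)) z₀
    have hblo : ENNReal.ofReal (⨍ w in A, (g w - c)) ≤ M := by
      refine le_trans ?_ hblo0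
      rw [bloNorm]
      exact le_iSup₂ (f := fun S (_ : S ∈ 𝒮i i₀) => ENNReal.ofReal
        (⨍ z in S, (f (Function.update z₀ i₀ z) -
          essInf (fun w => f (Function.update z₀ i₀ w)) (volume.restrict S))))
        (T i₀) (hT i₀ trivial)
    have havg : ⨍ w in A, (g w - c) ≤ M' := by
      rcases le_or_gt (⨍ w in A, (g w - c)) 0 with h0 | h0
      · exact h0.trans ENNReal.toReal_nonneg
      · have h6 := ENNReal.toReal_mono hMne hblo
        rwa [ENNReal.toReal_ofReal h0.le] at h6
    have hIe : ∫ w in A, (g w - c) = (volume A).toReal * ⨍ w in A, (g w - c) := by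
      rw [setAverage_eq, smul_eq_mul, measureReal_def, ← mul_assoc, mul_inv_cancel₀ ha, one_mul]
    calc ∫ w in A, h (Function.update z₀ i₀ w) ≤ ∫ w in A, (g w - c) := step1
      _ = (volume A).toReal * ⨍ w in A, (g w - c) := hIe
      _ ≤ (volume A).toReal * M' := by
          exact mul_le_mul_of_nonneg_left havg ENNReal.toReal_nonneg
      _ = M' * (volume A).toReal := mul_comm _ _
  -- outer bound
  have hIint : Integrable (fun y => ∫ w in A, h (e.symm (w, y))) (volume.restrict B) :=
    hFint.integral_prod_right
  have hconst : Integrable (fun _ : ∀ j : {j : Fin k // j ≠ i₀}, π j =>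
      M' * (volume A).toReal) (volume.restrict B) :=
    integrableOn_const hvolBt
  have houter : ∫ y in B, ∫ w in A, h (e.symm (w, y)) ≤
      (volume B).toReal * (M' * (volume A).toReal) := by
    calc ∫ y in B, ∫ w in A, h (e.symm (w, y))
        ≤ ∫ _y in B, M' * (volume A).toReal := integral_mono hIint hconst hinner
      _ = (volume B).toReal * (M' * (volume A).toReal) := by
          rw [setIntegral_const, smul_eq_mul, measureReal_def]
  have hfinal : ⨍ z in univ.pi T, h z ≤ M' := by
    rw [setAverage_eq, smul_eq_mul]
    calc (volume (univ.pi T)).toReal⁻¹ * ∫ z in univ.pi T, h z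
        ≤ (volume (univ.pi T)).toReal⁻¹ * ((volume B).toReal * (M' * (volume A).toReal)) := by
          refine mul_le_mul_of_nonneg_left ?_ (inv_nonneg.2 ENNReal.toReal_nonneg)
          rw [hIeq]; exact houter
      _ = M' := by
          rw [hvolS, ENNReal.toReal_mul]
          field_simp
  calc ENNReal.ofReal (⨍ z in univ.pi T, h z) ≤ ENNReal.ofReal M' :=
        ENNReal.ofReal_le_ofReal hfinal
    _ = M := ENNReal.ofReal_toReal hMne

/-- Write `ℝⁿ = ℝ^{n₁}×⋯×ℝ^{n_k}` and let `𝒮` have the strong decomposition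
property with respect to bases `𝒮ᵢ` in `ℝ^{nᵢ}`. If `f ∈ BLO_{𝒮ᵢ}(ℝⁿ)` for some `i`, then
`f ∈ BLO_{rec,𝒮}` with `‖f‖_{BLO_{rec,𝒮}} ≤ ‖f‖_{BLO_{𝒮ᵢ}(ℝⁿ)}`. Consequently, if
`f ∈ ⋃ᵢ BLO_{𝒮ᵢ}(ℝⁿ)`, then `‖f‖_{BLO_{rec,𝒮}} ≤ minᵢ ‖f‖_{BLO_{𝒮ᵢ}(ℝⁿ)}`. -/
theorem lower_dim_blo_subset_rec_blo {k : ℕ} {n : Fin k → ℕ} (hk : 2 ≤ k)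
    (𝒮 : Set (Set (∀ j, Fin (n j) → ℝ))) (𝒮i : ∀ i, Set (Set (Fin (n i) → ℝ)))
    (h𝒮 : IsShapeBasis 𝒮) (h𝒮i : ∀ i, IsShapeBasis (𝒮i i))
    (hstrong : StrongDecomposition 𝒮 𝒮i)
    (f : (∀ j, Fin (n j) → ℝ) → ℝ) (hfm : Measurable f)
    (hfi : ∀ S ∈ 𝒮, IntegrableOn f S)
    (hslice : ∀ (i : Fin k) (z : ∀ j, Fin (n j) → ℝ), ∀ Si ∈ 𝒮i i,
      IntegrableOn (fun w => f (Function.update z i w)) Si) :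
    (∀ i, bloSliceNorm i (𝒮i i) f < ⊤ →
      recBloNorm 𝒮i f < ⊤ ∧ recBloNorm 𝒮i f ≤ bloSliceNorm i (𝒮i i) f) ∧
    ((∃ i, bloSliceNorm i (𝒮i i) f < ⊤) →
      recBloNorm 𝒮i f ≤ ⨅ i, bloSliceNorm i (𝒮i i) f) := by
  constructor
  · intro i hi
    have h1 := aux_rec_le_slice hk 𝒮i h𝒮i f hslice i hi
    exact ⟨lt_of_le_of_lt h1 hi, h1⟩
  · rintro ⟨i, hi⟩
    refine le_iInf fun j => ?_
    by_cases hj : bloSliceNorm j (𝒮i j) f < ⊤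
    · exact aux_rec_le_slice hk 𝒮i h𝒮i f hslice j hj
    · exact le_trans le_top (not_lt.1 hj)
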